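/- (Absence of Fast Finalization) Let firstVote be a partial map from the n replicas to blocks recording at most one first vote per replica as seen by a replica Q, let allVotes be the number of replicas with a recorded vote, and maxVotes the maximum number of recorded votes on any single non-timeout block. If allVotes - maxVotes ≥ f + p + 1 and n ≥ 3f + 2p + 1 with at most f corrupt replicas, then no block can be fast finalized (i.e., for no block B do at least n - p - f' honest replicas first vote for B, where f' ≤ f is the number of corrupt replicas). -/
import Mathlib


/-- Absence of Fast Finalization: if for replica `Q`'s recorded first-vote map
`allVotes - maxVotes ≥ f + p + 1`, then no non-timeout block can be fast
finalized, i.e. no block `B ≠ timeout` receives first votes from at least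
`n - p - f'` honest replicas. -/
theorem absence_of_fast_finalization
    {α Block : Type} [DecidableEq α] [DecidableEq Block]
    (n f p f' : ℕ) (hn : n ≥ 3 * f + 2 * p + 1) (hf' : f' ≤ f)
    (R : Finset α) (hR : R.card = n)
    (corrupt : Finset α) (hcsub : corrupt ⊆ R) (hc : corrupt.card = f')
    (timeout : Block)
    (firstVote : α → Option Block)   -- actual first vote of each (honest) replica
    (viewQ : α → Option Block)       -- Q records at most one first vote per replica
    (hagree : ∀ r ∈ R \ corrupt, ∀ b : Block, viewQ r = some b → firstVote r = some b)
    (hgap :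
      (R.filter (fun r => viewQ r ≠ none)).card -
        (R.sup (fun r =>
          match viewQ r with
          | none => 0
          | some B =>
              if B = timeout then 0
              else (R.filter (fun r' => viewQ r' = some B)).card)) ≥ f + p + 1) :
    ∀ B : Block, B ≠ timeout →
      ((R \ corrupt).filter (fun r => firstVote r = some B)).card < n - p - f' := by
  intro B hB
  classical
  set M := R.sup (fun r =>
          match viewQ r with
          | none => 0
          | some B =>
              if B = timeout then 0
              else (R.filter (fun r' => viewQ r' = some B)).card) with hMdef
  set A := R.filter (fun r => viewQ r ≠ none) with hAdef
  set O := R.filter (fun r => viewQ r ≠ none ∧ viewQ r ≠ some B) with hOdef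
  set cnt := (R.filter (fun r' => viewQ r' = some B)).card with hcntdef
  -- cnt ≤ M
  have hle : cnt ≤ M := by
    by_cases hx : ∃ r ∈ R, viewQ r = some B
    · obtain ⟨r, hr, hv⟩ := hx
      have := Finset.le_sup (f := fun r =>
          match viewQ r with
          | none => 0
          | some B =>
              if B = timeout then 0
              else (R.filter (fun r' => viewQ r' = some B)).card) hr
      rw [← hMdef] at this
      simpa [hv, hB, ← hcntdef] using this
    · have hempty : R.filter (fun r' => viewQ r' = some B) = ∅ := by
        apply Finset.filter_eq_empty_iff.mpr
        intro r hr hv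
        exact hx ⟨r, hr, hv⟩
      simp [hcntdef, hempty]
  -- split A into voters of B and others
  have h1 : A.filter (fun r => viewQ r = some B) = R.filter (fun r' => viewQ r' = some B) := by
    ext r
    simp only [hAdef, Finset.filter_filter, Finset.mem_filter]
    constructor
    · rintro ⟨h1, _, h3⟩; exact ⟨h1, h3⟩
    · rintro ⟨h1, h3⟩; exact ⟨h1, by simp [h3], h3⟩
  have h2 : A.filter (fun r => ¬ viewQ r = some B) = O := by
    ext r
    simp only [hAdef, hOdef, Finset.filter_filter, Finset.mem_filter]
  have hsplit : cnt + O.card = A.card := by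
    rw [hcntdef, ← h1, ← h2]
    exact Finset.card_filter_add_card_filter_not (p := fun r => viewQ r = some B)
  -- honest set counting
  have hHcard : (R \ corrupt).card = n - f' := by
    rw [Finset.card_sdiff_of_subset hcsub, hR, hc]
  have hdisj : Disjoint ((R \ corrupt).filter (fun r => firstVote r = some B)) (O \ corrupt) := by
    rw [Finset.disjoint_left]
    intro r hr1 hr2
    obtain ⟨hrR, hfv⟩ := Finset.mem_filter.mp hr1
    obtain ⟨hrO, hrc⟩ := Finset.mem_sdiff.mp hr2
    obtain ⟨hrR2, hvn, hvB⟩ := Finset.mem_filter.mp hrO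
    obtain ⟨b, hb⟩ := Option.ne_none_iff_exists'.mp hvn
    have hfb := hagree r hrR b hb
    rw [hfb] at hfv
    exact hvB (by rw [hb, Option.some_inj.mp hfv])
  have hcount : ((R \ corrupt).filter (fun r => firstVote r = some B)).card
      + (O \ corrupt).card ≤ n - f' := by
    rw [← hHcard, ← Finset.card_union_of_disjoint hdisj]
    apply Finset.card_le_card
    intro r hr
    rcases Finset.mem_union.mp hr with h | h
    · exact (Finset.mem_filter.mp h).1
    · obtain ⟨hO', hc'⟩ := Finset.mem_sdiff.mp h
      exact Finset.mem_sdiff.mpr ⟨(Finset.mem_filter.mp hO').1, hc'⟩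
  have hOc : O.card ≤ (O \ corrupt).card + f' := by
    calc O.card ≤ ((O \ corrupt) ∪ corrupt).card := by
          apply Finset.card_le_card
          intro r hr
          by_cases hrc : r ∈ corrupt
          · exact Finset.mem_union_right _ hrc
          · exact Finset.mem_union_left _ (Finset.mem_sdiff.mpr ⟨hr, hrc⟩)
      _ ≤ (O \ corrupt).card + corrupt.card := Finset.card_union_le _ _
      _ = (O \ corrupt).card + f' := by rw [hc]
  have hAn : A.card ≤ n := by
    rw [← hR]; exact Finset.card_le_card (Finset.filter_subset _ _)
  have hfn : f' ≤ n := by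
    rw [← hR, ← hc]; exact Finset.card_le_card hcsub
  omega
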